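/- arXiv:1601.05670 — 4 statements merged into one kernel-verified Lean document; each statement's English description precedes it below -/
import Mathlib

section
/- Let F = (F₁, F₂) : ℝ² → ℝ² be a C¹ vector field with F(x+1, y) = F(x, y) for all (x, y) (so F descends to the torus). Suppose that every point p = (x, 1/2) with F₂(p) = 0 is a fold point, i.e. F₁(p)·∂F₂/∂x(p) + F₂(p)·∂F₂/∂y(p) ≠ 0. Then the set {x ∈ [0, 1) : F₂(x, 1/2) = 0} is finite and has even cardinality. (The parity statement underlying Theorem 3.5/Theorem B: an odd number of fold singularities on Σ₂ forces a curve of singular points or a line of tangential singularities, i.e. cannot occur if every tangential point is a fold.) -/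
open Set Filter Topology


lemma sign_flip {a b : ℝ} (h : a * b < 0) : (0 < b ↔ ¬ 0 < a) := by
  rcases mul_neg_iff.mp h with ⟨ha, hb⟩ | ⟨ha, hb⟩
  · constructor <;> intro <;> linarith
  · constructor <;> intro <;> linarith

lemma sign_near {g : ℝ → ℝ} {u c : ℝ} (h0 : g u = 0) (hd : HasDerivAt g c u)
    (hc : c ≠ 0) :
    (∀ᶠ y in 𝓝[>] u, 0 < g y * c) ∧ (∀ᶠ y in 𝓝[<] u, g y * c < 0) := by
  have hslope : Tendsto (slope g u) (𝓝[≠] u) (𝓝 c) :=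
    hasDerivAt_iff_tendsto_slope.mp hd
  have hmul : Tendsto (fun y => slope g u y * c) (𝓝[≠] u) (𝓝 (c * c)) :=
    hslope.mul_const c
  have hcc : (0:ℝ) < c * c := mul_self_pos.mpr hc
  have hev : ∀ᶠ y in 𝓝[≠] u, 0 < slope g u y * c :=
    hmul.eventually (eventually_gt_nhds hcc)
  have hs : ∀ y, slope g u y = g y / (y - u) := by
    intro y; simp [slope_def_field, h0]
  constructor
  · filter_upwards [nhdsWithin_mono u (fun y (hy : y ∈ Ioi u) => ne_of_gt hy) hev,
      self_mem_nhdsWithin] with y hy (hy2 : u < y)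
    rw [hs] at hy
    have hne : y - u ≠ 0 := by intro h; apply hc; nlinarith
    have h3 : 0 < (g y / (y - u)) * c * (y - u) := mul_pos hy (by linarith)
    have heq : (g y / (y - u)) * c * (y - u) = g y * c := by
      field_simp
    linarith [heq ▸ h3]
  · filter_upwards [nhdsWithin_mono u (fun y (hy : y ∈ Iio u) => ne_of_lt hy) hev,
      self_mem_nhdsWithin] with y hy (hy2 : y < u)
    rw [hs] at hy
    have hne : y - u ≠ 0 := by intro h; apply hc; nlinarith
    have h3 : (g y / (y - u)) * c * (y - u) < 0 :=
      mul_neg_of_pos_of_neg hy (by linarith)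
    have heq : (g y / (y - u)) * c * (y - u) = g y * c := by
      field_simp
    linarith [heq ▸ h3]

lemma const_sign {g : ℝ → ℝ} (hg : Continuous g) {u v y z : ℝ}
    (hne : ∀ w ∈ Ioo u v, g w ≠ 0) (hy : y ∈ Ioo u v) (hz : z ∈ Ioo u v) :
    0 < g y * g z := by
  rcases lt_trichotomy (g y * g z) 0 with h | h | h
  · exfalso
    have h0 : (0:ℝ) ∈ uIcc (g y) (g z) := by
      rcases mul_neg_iff.mp h with ⟨h1, h2⟩ | ⟨h1, h2⟩ <;> rw [mem_uIcc]
      · right; constructor <;> linarith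
      · left; constructor <;> linarith
    obtain ⟨w, hw, hw0⟩ := intermediate_value_uIcc (f := g) (hg.continuousOn) h0
    exact hne w (Set.ordConnected_Ioo.uIcc_subset hy hz hw) hw0
  · exfalso
    rcases mul_eq_zero.mp h with h1 | h1
    · exact hne y hy h1
    · exact hne z hz h1
  · exact h

/-- consecutive simple zeros have opposite derivative signs -/
lemma consecutive_zeros {g : ℝ → ℝ} (hg : Continuous g) {u v cu cv : ℝ}
    (huv : u < v) (hu : g u = 0) (hv : g v = 0)
    (hdu : HasDerivAt g cu u) (hdv : HasDerivAt g cv v)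
    (hcu : cu ≠ 0) (hcv : cv ≠ 0)
    (hno : ∀ w ∈ Ioo u v, g w ≠ 0) : cu * cv < 0 := by
  have h1 := (sign_near hu hdu hcu).1
  have h2 := (sign_near hv hdv hcv).2
  have hI1 : Ioo u v ∈ 𝓝[>] u := Ioo_mem_nhdsGT_of_mem ⟨le_refl u, huv⟩
  have hI2 : Ioo u v ∈ 𝓝[<] v := Ioo_mem_nhdsLT_of_mem ⟨huv, le_refl v⟩
  obtain ⟨y, hy1, hy2⟩ := (h1.and hI1).exists
  obtain ⟨z, hz1, hz2⟩ := (h2.and hI2).exists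
  have h3 : 0 < g y * g z := const_sign hg hno hy2 hz2
  nlinarith [mul_pos hy1 h3]


lemma zeros_finite {g : ℝ → ℝ} (hg : Continuous g)
    (hd : ∀ x, HasDerivAt g (deriv g x) x)
    (hz : ∀ x, g x = 0 → deriv g x ≠ 0) :
    ({x ∈ Set.Ico (0:ℝ) 1 | g x = 0}).Finite := by
  set Z : Set ℝ := Icc 0 1 ∩ {x | g x = 0} with hZ
  have hclosed : IsClosed Z :=
    isClosed_Icc.inter (isClosed_singleton.preimage hg)
  have hcomp : IsCompact Z :=
    isCompact_Icc.of_isClosed_subset hclosed inter_subset_left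
  have hdisc : DiscreteTopology Z := by
    rw [discreteTopology_subtype_iff]
    intro x hx
    have hgx : g x = 0 := hx.2
    have hc := hz x hgx
    obtain ⟨h1, h2⟩ := sign_near hgx (hd x) hc
    have h1' : ∀ᶠ y in 𝓝[>] x, g y ≠ 0 := by
      filter_upwards [h1] with y hy h; rw [h] at hy; simp at hy
    have h2' : ∀ᶠ y in 𝓝[<] x, g y ≠ 0 := by
      filter_upwards [h2] with y hy h; rw [h] at hy; simp at hy
    have hne : ∀ᶠ y in 𝓝[≠] x, g y ≠ 0 := by
      rw [← nhdsLT_sup_nhdsGT]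
      exact eventually_sup.mpr ⟨h2', h1'⟩
    rw [inf_principal_eq_bot]
    filter_upwards [hne] with y hy hymem
    exact hy hymem.2
  exact (hcomp.finite (isDiscrete_iff_discreteTopology.mpr hdisc)).subset
    (fun x hx => ⟨⟨hx.1.1, le_of_lt hx.1.2⟩, hx.2⟩)

lemma zeros_even {g : ℝ → ℝ} (hg : Continuous g)
    (hd : ∀ x, HasDerivAt g (deriv g x) x)
    (hper : ∀ x, g (x + 1) = g x)
    (hz : ∀ x, g x = 0 → deriv g x ≠ 0) :
    ({x ∈ Set.Ico (0:ℝ) 1 | g x = 0}).Finite ∧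
      Even ({x ∈ Set.Ico (0:ℝ) 1 | g x = 0}).ncard := by
  have hfin := zeros_finite hg hd hz
  refine ⟨hfin, ?_⟩
  -- shift of derivative by periodicity
  have hshift : ∀ x, HasDerivAt g (deriv g x) (x + 1) := by
    intro x
    have h1 : HasDerivAt (fun y : ℝ => y - 1) 1 (x + 1) :=
      (hasDerivAt_id (x+1)).sub_const 1
    have h2 : HasDerivAt (g ∘ fun y : ℝ => y - 1) (deriv g x * 1) (x + 1) := by
      apply HasDerivAt.comp
      · simpa using hd x
      · exact h1
    have h3 : (g ∘ fun y : ℝ => y - 1) = g := by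
      funext y
      have := hper (y - 1)
      simpa using this.symm
    rw [h3, mul_one] at h2
    exact h2
  set T : Finset ℝ := hfin.toFinset with hT
  have hncard : ({x ∈ Set.Ico (0:ℝ) 1 | g x = 0}).ncard = T.card := by
    rw [hT, Set.ncard_eq_toFinset_card _ hfin]
  rw [hncard]
  set l : List ℝ := T.sort (· ≤ ·) with hl
  have hlen : l.length = T.card := Finset.length_sort _
  rw [← hlen]
  have hsort : l.SortedLT := Finset.sortedLT_sort T
  have hmono : StrictMono l.get := hsort.strictMono_get
  have hmem : ∀ i : Fin l.length, l.get i ∈ Set.Ico (0:ℝ) 1 ∧ g (l.get i) = 0 := by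
    intro i
    have : l.get i ∈ T :=
      (Finset.mem_sort (α := ℝ) (· ≤ ·)).mp (List.mem_iff_get.mpr ⟨i, rfl⟩)
    rw [hT, Set.Finite.mem_toFinset] at this
    exact ⟨this.1, this.2⟩
  have hmemS : ∀ x, x ∈ Set.Ico (0:ℝ) 1 → g x = 0 → ∃ j : Fin l.length, l.get j = x := by
    intro x hx hgx
    have : x ∈ l := by
      rw [hl, Finset.mem_sort, hT, Set.Finite.mem_toFinset]
      exact ⟨hx, hgx⟩
    obtain ⟨j, hj⟩ := List.mem_iff_get.mp this
    exact ⟨j, hj⟩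
  rcases Nat.eq_zero_or_pos l.length with h0 | hpos
  · rw [h0]; exact Even.zero
  -- derivative at each zero
  set m := l.length with hm
  have hdne : ∀ i : Fin m, deriv g (l.get i) ≠ 0 := fun i => hz _ (hmem i).2
  -- alternation for consecutive indices
  have alt : ∀ (i : ℕ) (h1 : i < m) (h2 : i + 1 < m),
      deriv g (l.get ⟨i, h1⟩) * deriv g (l.get ⟨i+1, h2⟩) < 0 := by
    intro i h1 h2
    set u := l.get ⟨i, h1⟩
    set v := l.get ⟨i+1, h2⟩
    have huv : u < v := hmono (by simp [Fin.lt_def])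
    refine consecutive_zeros hg huv (hmem _).2 (hmem _).2 (hd u) (hd v)
      (hdne _) (hdne _) ?_
    intro w hw hgw
    have hw0 : w ∈ Set.Ico (0:ℝ) 1 :=
      ⟨le_trans (hmem ⟨i, h1⟩).1.1 (le_of_lt hw.1), lt_trans hw.2 (hmem ⟨i+1, h2⟩).1.2⟩
    obtain ⟨j, hj⟩ := hmemS w hw0 hgw
    have hij : (⟨i, h1⟩ : Fin m) < j := hmono.lt_iff_lt.mp (by rw [hj]; exact hw.1)
    have hji : j < (⟨i+1, h2⟩ : Fin m) := hmono.lt_iff_lt.mp (by rw [hj]; exact hw.2)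
    simp only [Fin.lt_def, Fin.val_mk] at hij hji
    omega
  -- wraparound
  have hlast : m - 1 < m := Nat.sub_lt hpos one_pos
  have wrap : deriv g (l.get ⟨m - 1, hlast⟩) * deriv g (l.get ⟨0, hpos⟩) < 0 := by
    set u := l.get ⟨m - 1, hlast⟩
    set x0 := l.get ⟨0, hpos⟩
    have hu1 : u < 1 := (hmem _).1.2
    have hx00 : 0 ≤ x0 := (hmem _).1.1
    have huv : u < x0 + 1 := by linarith
    have hgv : g (x0 + 1) = 0 := by rw [hper]; exact (hmem _).2
    refine consecutive_zeros hg huv (hmem _).2 hgv (hd u) (hshift x0)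
      (hdne _) (hdne _) ?_
    intro w hw hgw
    rcases lt_or_ge w 1 with hw1 | hw1
    · have hw0 : w ∈ Set.Ico (0:ℝ) 1 := ⟨le_trans (hmem _).1.1 (le_of_lt hw.1), hw1⟩
      obtain ⟨j, hj⟩ := hmemS w hw0 hgw
      have hij : (⟨m - 1, hlast⟩ : Fin m) < j := hmono.lt_iff_lt.mp (by rw [hj]; exact hw.1)
      simp only [Fin.lt_def, Fin.val_mk] at hij
      omega
    · have hgw' : g (w - 1) = 0 := by
        have := hper (w - 1); rw [show w - 1 + 1 = w by ring] at this
        rw [← this]; exact hgw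
      have hx01 : x0 < 1 := (hmem _).1.2
      have hw0 : w - 1 ∈ Set.Ico (0:ℝ) 1 := ⟨by linarith, by linarith [hw.2]⟩
      obtain ⟨j, hj⟩ := hmemS (w - 1) hw0 hgw'
      have hji : j < (⟨0, hpos⟩ : Fin m) := hmono.lt_iff_lt.mp (by rw [hj]; linarith [hw.2])
      simp only [Fin.lt_def, Fin.val_mk] at hji
      omega
  -- alternation of signs by induction
  have key : ∀ i (h1 : i < m),
      (0 < deriv g (l.get ⟨i, h1⟩) ↔ (Even i ↔ 0 < deriv g (l.get ⟨0, hpos⟩))) := by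
    intro i
    induction i with
    | zero => intro h1; simp
    | succ k ih =>
      intro h1
      have hk : k < m := Nat.lt_of_succ_lt h1
      have := sign_flip (alt k hk h1)
      rw [this, ih hk, Nat.even_add_one]
      tauto
  have h1 := key (m - 1) hlast
  have h2 := sign_flip wrap
  rw [h1] at h2
  rcases Nat.even_or_odd m with h | h
  · exact h
  · exfalso
    have he : Even (m - 1) := Nat.Odd.sub_odd h odd_one
    tauto


/-- Parity statement underlying Theorem 3.5 / Theorem B: for a `C¹` vector
field `F = (F₁, F₂)` on `ℝ²`, `1`-periodic in `x`, all of whose tangential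
singularities on `Σ₂ = {y = 1/2}` are fold points, the set of tangential
singularities in one period is finite with even cardinality. -/
theorem fold_points_even (F : ℝ × ℝ → ℝ × ℝ)
    (hF : ContDiff ℝ 1 F)
    (hper : ∀ x y : ℝ, F (x + 1, y) = F (x, y))
    (hfold : ∀ x : ℝ, (F (x, 1/2)).2 = 0 →
      (F (x, 1/2)).1 * fderiv ℝ (fun q => (F q).2) (x, 1/2) (1, 0) +
      (F (x, 1/2)).2 * fderiv ℝ (fun q => (F q).2) (x, 1/2) (0, 1) ≠ 0) :
    ({x ∈ Set.Ico (0 : ℝ) 1 | (F (x, 1/2)).2 = 0}).Finite ∧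
      Even ({x ∈ Set.Ico (0 : ℝ) 1 | (F (x, 1/2)).2 = 0}).ncard := by
  set G : ℝ × ℝ → ℝ := fun q => (F q).2 with hG
  set g : ℝ → ℝ := fun x => (F (x, 1/2)).2 with hg
  have hGc : ContDiff ℝ 1 G := contDiff_snd.comp hF
  have hgc : Continuous g :=
    hGc.continuous.comp (continuous_id.prodMk continuous_const)
  have hderiv : ∀ x : ℝ, HasDerivAt g (fderiv ℝ G (x, 1/2) (1, 0)) x := by
    intro x
    have hL : HasDerivAt (fun x : ℝ => (x, (1:ℝ)/2)) ((1:ℝ), (0:ℝ)) x :=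
      (hasDerivAt_id x).prodMk (hasDerivAt_const x _)
    have hFD : HasFDerivAt G (fderiv ℝ G (x, 1/2)) (x, 1/2) :=
      (hGc.differentiable one_ne_zero (x, 1/2)).hasFDerivAt
    have hc := hFD.comp_hasDerivAt x hL
    exact hc
  have hderiv' : ∀ x : ℝ, deriv g x = fderiv ℝ G (x, 1/2) (1, 0) :=
    fun x => (hderiv x).deriv
  have hd : ∀ x : ℝ, HasDerivAt g (deriv g x) x := by
    intro x; rw [hderiv']; exact hderiv x
  have hper' : ∀ x : ℝ, g (x + 1) = g x := by
    intro x
    show (F (x + 1, 1/2)).2 = (F (x, 1/2)).2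
    rw [hper]
  have hz : ∀ x : ℝ, g x = 0 → deriv g x ≠ 0 := by
    intro x hx
    have h := hfold x hx
    have hx2 : (F (x, 1/2)).2 = 0 := hx
    rw [hx2, zero_mul, add_zero] at h
    rw [hderiv']
    intro h0
    rw [h0, mul_zero] at h
    exact h rfl
  exact zeros_even hgc hd hper' hz
end

section
/- Let f : ℝ → ℝ be continuously differentiable with f(x+1) = f(x) for all x, and suppose every zero of f is hyperbolic, i.e. f(z) = 0 implies f'(z) ≠ 0. Then the set {x ∈ [0, 1) : f(x) = 0} is finite and has even cardinality. (Theorem 4.3, first part: the number of hyperbolic pseudo equilibria of the sliding vector field on the torus or sphere is even.) -/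
open Set Filter Topology

/-- A zero with nonzero derivative is isolated. -/
private lemma isolated_zero {f : ℝ → ℝ} {z : ℝ} (hd : HasDerivAt f (deriv f z) z)
    (hz : f z = 0) (hd0 : deriv f z ≠ 0) : ∀ᶠ x in 𝓝[≠] z, f x ≠ 0 := by
  have h := hasDerivAt_iff_tendsto_slope.mp hd
  have h2 : ∀ᶠ x in 𝓝[≠] z, slope f z x ≠ 0 := h (eventually_ne_nhds hd0)
  filter_upwards [h2] with x hx hfx
  apply hx
  simp [slope, hz, hfx]

private lemma deriv_nonneg_right {f : ℝ → ℝ} {a b d : ℝ} (hab : a < b)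
    (hd : HasDerivAt f d a) (hfa : f a = 0)
    (hpos : ∀ x ∈ Set.Ioo a b, 0 < f x) : 0 ≤ d := by
  have h := hasDerivAt_iff_tendsto_slope.mp hd
  have h' : Tendsto (slope f a) (𝓝[>] a) (𝓝 d) :=
    h.mono_left (nhdsWithin_mono _ (fun x hx => ne_of_gt hx))
  refine ge_of_tendsto h' ?_
  filter_upwards [Ioo_mem_nhdsGT_of_mem ⟨le_refl a, hab⟩] with x hx
  rw [slope_def_field, hfa, sub_zero]
  exact div_nonneg (hpos x hx).le (by linarith [hx.1])

private lemma deriv_nonpos_left {f : ℝ → ℝ} {a b d : ℝ} (hab : a < b)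
    (hd : HasDerivAt f d b) (hfb : f b = 0)
    (hpos : ∀ x ∈ Set.Ioo a b, 0 < f x) : d ≤ 0 := by
  have h := hasDerivAt_iff_tendsto_slope.mp hd
  have h' : Tendsto (slope f b) (𝓝[<] b) (𝓝 d) :=
    h.mono_left (nhdsWithin_mono _ (fun x hx => ne_of_lt hx))
  refine le_of_tendsto h' ?_
  filter_upwards [Ioo_mem_nhdsLT_of_mem ⟨hab, le_refl b⟩] with x hx
  rw [slope_def_field, hfb]
  have h1 : 0 ≤ f x - 0 := by linarith [hpos x hx]
  have h2 : x - b ≤ 0 := by linarith [hx.2]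
  exact div_nonpos_of_nonneg_of_nonpos h1 h2

/-- Between consecutive simple zeros the derivative signs alternate. -/
private lemma deriv_mul_neg {f : ℝ → ℝ} (hdiff : ∀ x, HasDerivAt f (deriv f x) x)
    (hcont : Continuous f) {a b : ℝ} (hab : a < b) (hfa : f a = 0) (hfb : f b = 0)
    (ha' : deriv f a ≠ 0) (hb' : deriv f b ≠ 0)
    (hno : ∀ x ∈ Set.Ioo a b, f x ≠ 0) : deriv f a * deriv f b < 0 := by
  have key : (∀ x ∈ Set.Ioo a b, 0 < f x) ∨ (∀ x ∈ Set.Ioo a b, f x < 0) := by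
    by_contra h
    push_neg at h
    obtain ⟨⟨x, hx, hx0⟩, ⟨y, hy, hy0⟩⟩ := h
    have hxneg : f x < 0 := lt_of_le_of_ne hx0 (hno x hx)
    have hypos : 0 < f y := lt_of_le_of_ne hy0 (Ne.symm (hno y hy))
    have h0 : (0:ℝ) ∈ Set.uIcc (f x) (f y) := by
      rw [Set.mem_uIcc]; left; exact ⟨hxneg.le, hypos.le⟩
    obtain ⟨c, hc, hfc⟩ := intermediate_value_uIcc (hcont.continuousOn) h0
    exact hno c ((Set.ordConnected_Ioo.uIcc_subset hx hy) hc) hfc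
  rcases key with hpos | hneg
  · have h1 : 0 < deriv f a :=
      lt_of_le_of_ne (deriv_nonneg_right hab (hdiff a) hfa hpos) (Ne.symm ha')
    have h2 : deriv f b < 0 :=
      lt_of_le_of_ne (deriv_nonpos_left hab (hdiff b) hfb hpos) hb'
    exact mul_neg_of_pos_of_neg h1 h2
  · have hpos' : ∀ x ∈ Set.Ioo a b, 0 < (fun t => -f t) x := fun x hx => by
      simpa using hneg x hx
    have h1 : deriv f a < 0 := by
      have := deriv_nonneg_right hab ((hdiff a).neg) (by simp [hfa]) hpos'
      rcases lt_or_eq_of_le (by linarith : deriv f a ≤ 0) with h | h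
      · exact h
      · exact absurd h ha'
    have h2 : 0 < deriv f b := by
      have := deriv_nonpos_left hab ((hdiff b).neg) (by simp [hfb]) hpos'
      rcases lt_or_eq_of_le (by linarith : 0 ≤ deriv f b) with h | h
      · exact h
      · exact absurd h.symm hb'
    exact mul_neg_of_neg_of_pos h1 h2

/-- Theorem 4.3, first part: if all zeros of the `1`-periodic `C¹` sliding
vector field `f` are hyperbolic, then the number of pseudo equilibria in one
period is finite and even. -/
theorem pseudo_equilibria_even (f : ℝ → ℝ)
    (hf : ContDiff ℝ 1 f)
    (hper : ∀ x : ℝ, f (x + 1) = f x)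
    (hhyp : ∀ z : ℝ, f z = 0 → deriv f z ≠ 0) :
    ({x ∈ Set.Ico (0 : ℝ) 1 | f x = 0}).Finite ∧
      Even ({x ∈ Set.Ico (0 : ℝ) 1 | f x = 0}).ncard := by
  have hcont : Continuous f := hf.continuous
  have hdiff : ∀ x, HasDerivAt f (deriv f x) x := fun x =>
    ((hf.differentiable one_ne_zero) x).hasDerivAt
  have hdper : ∀ x : ℝ, deriv f (x + 1) = deriv f x := by
    intro x
    have hfe : (fun y => f (y + 1)) = f := funext hper
    calc deriv f (x + 1) = deriv (fun y => f (y + 1)) x := (deriv_comp_add_const f 1 x).symm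
      _ = deriv f x := by rw [hfe]
  set S : Set ℝ := {x ∈ Set.Ico (0 : ℝ) 1 | f x = 0} with hS
  -- Finiteness
  have hfin : S.Finite := by
    by_contra hinf
    obtain ⟨z, hzK, hz⟩ :=
      (Set.Infinite.exists_accPt_of_subset_isCompact (K := Set.Icc (0:ℝ) 1) hinf isCompact_Icc
        (fun x hx => ⟨hx.1.1, hx.1.2.le⟩))
    have hzc : z ∈ closure S := mem_closure_iff_clusterPt.mpr hz.clusterPt
    have hfz : f z = 0 := by
      have hsub : closure S ⊆ f ⁻¹' {0} :=
        closure_minimal (fun x hx => hx.2) (isClosed_singleton.preimage hcont)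
      exact hsub hzc
    have hiso := isolated_zero (hdiff z) hfz (hhyp z hfz)
    haveI : (𝓝[≠] z ⊓ 𝓟 S).NeBot := hz
    have h1 : ∀ᶠ x in 𝓝[≠] z ⊓ 𝓟 S, f x ≠ 0 := hiso.filter_mono inf_le_left
    have h2 : ∀ᶠ x in 𝓝[≠] z ⊓ 𝓟 S, f x = 0 :=
      Filter.eventually_inf_principal.mpr (Filter.Eventually.of_forall fun x hx => hx.2)
    obtain ⟨x, hx1, hx2⟩ := (h1.and h2).exists
    exact hx1 hx2
  refine ⟨hfin, ?_⟩
  -- Evenness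
  set t : Finset ℝ := hfin.toFinset with ht
  have hcard : S.ncard = t.card := Set.ncard_eq_toFinset_card S hfin
  rw [hcard]
  set n := t.card with hn
  rcases Nat.eq_zero_or_pos n with h0 | hnpos
  · simp [h0]
  have hne : n ≠ 0 := hnpos.ne'
  set e := t.orderIsoOfFin rfl with he
  set z : Fin n → ℝ := fun i => (e i : ℝ) with hzdef
  have hzmem : ∀ i, z i ∈ S := fun i => hfin.mem_toFinset.mp (e i).2
  have hzmono : StrictMono z := fun i j hij => by
    exact_mod_cast e.strictMono hij
  have hzsurj : ∀ x ∈ S, ∃ i, z i = x := by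
    intro x hx
    obtain ⟨i, hi⟩ := e.surjective ⟨x, hfin.mem_toFinset.mpr hx⟩
    exact ⟨i, by rw [hzdef]; exact congrArg Subtype.val hi⟩
  have hd0 : ∀ i, deriv f (z i) ≠ 0 := fun i => hhyp _ (hzmem i).2
  -- alternation between consecutive zeros
  have halt : ∀ (k : ℕ) (hk : k + 1 < n),
      deriv f (z ⟨k, by omega⟩) * deriv f (z ⟨k + 1, hk⟩) < 0 := by
    intro k hk
    apply deriv_mul_neg hdiff hcont (hzmono (show (⟨k, by omega⟩ : Fin n) < ⟨k+1, hk⟩ by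
      simp [Fin.lt_def])) (hzmem _).2 (hzmem _).2 (hd0 _) (hd0 _)
    intro x hx hfx
    have hxS : x ∈ S := by
      refine ⟨⟨le_trans (hzmem ⟨k, by omega⟩).1.1 hx.1.le,
        lt_trans hx.2 (hzmem ⟨k+1, hk⟩).1.2⟩, hfx⟩
    obtain ⟨j, hj⟩ := hzsurj x hxS
    have h1 : (⟨k, by omega⟩ : Fin n) < j := hzmono.lt_iff_lt.mp (by rw [hj]; exact hx.1)
    have h2 : j < (⟨k+1, hk⟩ : Fin n) := hzmono.lt_iff_lt.mp (by rw [hj]; exact hx.2)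
    simp [Fin.lt_def] at h1 h2
    omega
  -- wrap-around alternation
  have hlast : deriv f (z ⟨n - 1, by omega⟩) * deriv f (z ⟨0, by omega⟩) < 0 := by
    set a := z ⟨n - 1, by omega⟩ with ha
    set z0 := z ⟨0, by omega⟩ with hz0
    have hz0mem := hzmem ⟨0, by omega⟩
    have hamem := hzmem ⟨n - 1, by omega⟩
    have hab : a < z0 + 1 := lt_of_lt_of_le hamem.1.2 (by linarith [hz0mem.1.1])
    have hfb : f (z0 + 1) = 0 := by rw [hper]; exact hz0mem.2
    have hdb : deriv f (z0 + 1) = deriv f z0 := hdper z0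
    have key : deriv f a * deriv f (z0 + 1) < 0 := by
      apply deriv_mul_neg hdiff hcont hab hamem.2 hfb (hd0 _) (by rw [hdb]; exact hd0 _)
      intro x hx hfx
      rcases lt_or_ge x 1 with hx1 | hx1
      · have hxS : x ∈ S := ⟨⟨le_trans hamem.1.1 hx.1.le, hx1⟩, hfx⟩
        obtain ⟨j, hj⟩ := hzsurj x hxS
        have h1 : (⟨n - 1, by omega⟩ : Fin n) < j := hzmono.lt_iff_lt.mp (by rw [hj]; exact hx.1)
        have h2 := j.isLt
        simp [Fin.lt_def] at h1
        omega
      · have hfx' : f (x - 1) = 0 := by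
          have h := hper (x - 1); rw [sub_add_cancel] at h; rw [← h]; exact hfx
        have hxS : x - 1 ∈ S := ⟨⟨by linarith, by linarith [hx.2, hz0mem.1.2]⟩, hfx'⟩
        obtain ⟨j, hj⟩ := hzsurj (x - 1) hxS
        have h1 : j < (⟨0, by omega⟩ : Fin n) := hzmono.lt_iff_lt.mp (by rw [hj]; linarith [hx.2])
        simp [Fin.lt_def] at h1
    rw [hdb] at key
    exact key
  -- sign propagation
  have hsign : ∀ (k : ℕ) (hk : k < n),
      0 < (-1 : ℝ) ^ k * (deriv f (z ⟨k, hk⟩) * deriv f (z ⟨0, by omega⟩)) := by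
    intro k
    induction k with
    | zero => intro hk; simpa using mul_self_pos.mpr (hd0 ⟨0, hk⟩)
    | succ m ih =>
      intro hk
      have IH := ih (by omega)
      have h1 := halt m hk
      set A := deriv f (z ⟨m, by omega⟩) with hA
      set B := deriv f (z ⟨m + 1, hk⟩) with hB
      set D := deriv f (z ⟨0, by omega⟩) with hD
      have hA2 : 0 < A * A := mul_self_pos.mpr (hd0 _)
      rw [pow_succ]
      nlinarith [mul_pos IH (neg_pos.mpr h1), hA2]
  -- conclude
  have hfinal := hsign (n - 1) (by omega)
  have hodd : Odd (n - 1) := by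
    by_contra hev
    rw [Nat.not_odd_iff_even] at hev
    rw [hev.neg_one_pow] at hfinal
    nlinarith [hlast]
  have : Even ((n - 1) + 1) := hodd.add_one
  simpa [Nat.sub_add_cancel hnpos] using this
end

section
/- Let f : ℝ → ℝ be continuously differentiable with f(x+1) = f(x) for all x, and suppose every zero of f is hyperbolic, i.e. f(z) = 0 implies f'(z) ≠ 0 (so the zero set Z = {x ∈ [0,1) : f(x) = 0} is finite). Then the sum over z ∈ Z of the signs sgn(f'(z)) equals 0. (The index argument in the proof of Theorem 4.3: the indices I(p_i) = sgn((X^s)'(p_i)) of the hyperbolic pseudo equilibria alternate and cancel around the circle.) -/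
open Set Filter Topology

/-- Zeros of `f` in a compact interval are finite when all zeros are hyperbolic. -/
lemma zeros_finite_aux {f : ℝ → ℝ} (hf : Differentiable ℝ f)
    (hhyp : ∀ z : ℝ, f z = 0 → deriv f z ≠ 0) (a b : ℝ) :
    {x ∈ Set.Icc a b | f x = 0}.Finite := by
  by_contra h
  have h' : {x ∈ Set.Icc a b | f x = 0}.Infinite := h
  obtain ⟨x, hxK, hx⟩ := h'.exists_accPt_of_subset_isCompact isCompact_Icc
    (fun y hy => hy.1)
  have hfx : f x = 0 := by
    have hcl : x ∈ closure {y ∈ Set.Icc a b | f y = 0} := by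
      have : ClusterPt x (𝓟 {y ∈ Set.Icc a b | f y = 0}) := hx.clusterPt
      rwa [← mem_closure_iff_clusterPt] at this
    have hsub : closure {y ∈ Set.Icc a b | f y = 0} ⊆ f ⁻¹' {0} := by
      apply closure_minimal (fun y hy => hy.2) (isClosed_singleton.preimage hf.continuous)
    exact hsub hcl
  have hne : ∀ᶠ z in 𝓝[≠] x, f z ≠ f x :=
    (hf.differentiableAt.hasDerivAt).eventually_ne (hhyp x hfx)
  have : ({z | f z ≠ f x} ∩ {y ∈ Set.Icc a b | f y = 0}).Nonempty := by
    haveI : (𝓝[≠] x ⊓ 𝓟 {y ∈ Set.Icc a b | f y = 0}).NeBot := hx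
    exact Filter.nonempty_of_mem (Filter.inter_mem_inf hne (Filter.mem_principal_self _))
  obtain ⟨y, hy1, hy2⟩ := this
  exact hy1 (by rw [hy2.2, hfx])

/-- If `f` vanishes at the endpoints and is positive inside, then the derivative is
nonnegative at the left endpoint and nonpositive at the right endpoint. -/
lemma deriv_signs_of_pos {f : ℝ → ℝ} {a b : ℝ} (hab : a < b)
    (hda : HasDerivAt f (deriv f a) a) (hdb : HasDerivAt f (deriv f b) b)
    (ha : f a = 0) (hb : f b = 0) (hpos : ∀ x ∈ Set.Ioo a b, 0 < f x) :
    0 ≤ deriv f a ∧ deriv f b ≤ 0 := by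
  constructor
  · have ht : Filter.Tendsto (slope f a) (𝓝[>] a) (𝓝 (deriv f a)) :=
      (hasDerivAt_iff_tendsto_slope.1 hda).mono_left
        (nhdsWithin_mono a (fun y hy => ne_of_gt hy))
    refine ge_of_tendsto ht ?_
    filter_upwards [Ioo_mem_nhdsGT hab] with x hx
    have h1 : 0 < x - a := by linarith [hx.1]
    have h2 : 0 < f x := hpos x hx
    rw [slope_def_field, div_eq_mul_inv]
    have : (0:ℝ) ≤ (f x - f a) * (x - a)⁻¹ := by
      apply mul_nonneg (by rw [ha]; linarith) (le_of_lt (inv_pos.2 h1))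
    linarith
  · have ht : Filter.Tendsto (slope f b) (𝓝[<] b) (𝓝 (deriv f b)) :=
      (hasDerivAt_iff_tendsto_slope.1 hdb).mono_left
        (nhdsWithin_mono b (fun y hy => ne_of_lt hy))
    refine le_of_tendsto ht ?_
    filter_upwards [Ioo_mem_nhdsLT hab] with x hx
    have h1 : x - b < 0 := by linarith [hx.2]
    have h2 : 0 < f x := hpos x hx
    rw [slope_def_field, div_eq_mul_inv]
    have : (f x - f b) * (x - b)⁻¹ ≤ 0 := by
      apply mul_nonpos_of_nonneg_of_nonpos (by rw [hb]; linarith)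
        (le_of_lt (inv_neg''.2 h1))
    linarith

/-- On a zero-free open interval a continuous function has constant sign. -/
lemma sign_const_aux {f : ℝ → ℝ} (hc : Continuous f) {a b : ℝ}
    (hne : ∀ x ∈ Set.Ioo a b, f x ≠ 0) :
    (∀ x ∈ Set.Ioo a b, 0 < f x) ∨ (∀ x ∈ Set.Ioo a b, f x < 0) := by
  by_contra h
  push_neg at h
  obtain ⟨⟨x, hx, hfx⟩, ⟨y, hy, hfy⟩⟩ := h
  have hfx' : f x < 0 := lt_of_le_of_ne hfx (hne x hx)
  have hfy' : 0 < f y := lt_of_le_of_ne hfy (Ne.symm (hne y hy))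
  have hsub : Set.uIcc x y ⊆ Set.Ioo a b := Set.ordConnected_Ioo.uIcc_subset hx hy
  have h0 : (0:ℝ) ∈ Set.uIcc (f x) (f y) := by
    rw [Set.mem_uIcc]; left; exact ⟨le_of_lt hfx', le_of_lt hfy'⟩
  obtain ⟨z, hz, hfz⟩ := intermediate_value_uIcc (hc.continuousOn) h0
  exact hne z (hsub hz) hfz

/-- Adjacent hyperbolic zeros have opposite indices. -/
lemma adjacent_signs {f : ℝ → ℝ} (hf : Differentiable ℝ f)
    (hhyp : ∀ z : ℝ, f z = 0 → deriv f z ≠ 0) {a b : ℝ} (hab : a < b)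
    (ha : f a = 0) (hb : f b = 0) (hne : ∀ x ∈ Set.Ioo a b, f x ≠ 0) :
    Real.sign (deriv f b) = - Real.sign (deriv f a) := by
  rcases sign_const_aux hf.continuous hne with hpos | hneg
  · obtain ⟨h1, h2⟩ := deriv_signs_of_pos hab (hf a).hasDerivAt (hf b).hasDerivAt ha hb hpos
    rw [Real.sign_of_pos (lt_of_le_of_ne h1 (Ne.symm (hhyp a ha))),
      Real.sign_of_neg (lt_of_le_of_ne h2 (hhyp b hb))]
  · have hda : HasDerivAt (fun x => -f x) (-(deriv f a)) a := (hf a).hasDerivAt.neg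
    have hdb : HasDerivAt (fun x => -f x) (-(deriv f b)) b := (hf b).hasDerivAt.neg
    have hd1 : deriv (fun x => -f x) a = -(deriv f a) := hda.deriv
    have hd2 : deriv (fun x => -f x) b = -(deriv f b) := hdb.deriv
    obtain ⟨h1, h2⟩ := deriv_signs_of_pos hab (hd1 ▸ hda) (hd2 ▸ hdb)
      (by simp [ha]) (by simp [hb]) (fun x hx => by simpa using hneg x hx)
    rw [hd1] at h1; rw [hd2] at h2
    have hna : deriv f a < 0 := by
      rcases lt_or_eq_of_le (by linarith : deriv f a ≤ 0) with h | h
      · exact h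
      · exact absurd h (hhyp a ha)
    have hpb : 0 < deriv f b := by
      rcases lt_or_eq_of_le (by linarith : 0 ≤ deriv f b) with h | h
      · exact h
      · exact absurd h.symm (hhyp b hb)
    rw [Real.sign_of_pos hpb, Real.sign_of_neg hna]
    norm_num

/-- Key induction: the sum of indices over `[a, b)` equals half the difference of the
endpoint indices, when `f` vanishes at both endpoints. -/
lemma sum_indices_Ico {f : ℝ → ℝ} (hf : Differentiable ℝ f)
    (hhyp : ∀ z : ℝ, f z = 0 → deriv f z ≠ 0) :
    ∀ n : ℕ, ∀ a b : ℝ, a < b → f a = 0 → f b = 0 →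
      ({x ∈ Set.Ioo a b | f x = 0}).ncard = n →
      ∑ᶠ z ∈ {x ∈ Set.Ico a b | f x = 0}, Real.sign (deriv f z)
        = (Real.sign (deriv f a) - Real.sign (deriv f b)) / 2 := by
  intro n
  induction n using Nat.strong_induction_on with
  | _ n ih =>
    intro a b hab ha hb hcard
    have hfinIcc := zeros_finite_aux hf hhyp a b
    have hfinIoo : {x ∈ Set.Ioo a b | f x = 0}.Finite :=
      hfinIcc.subset (fun x hx => ⟨Set.Ioo_subset_Icc_self hx.1, hx.2⟩)
    rcases Set.eq_empty_or_nonempty {x ∈ Set.Ioo a b | f x = 0} with hemp | ⟨c, hc⟩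
    · have hset : {x ∈ Set.Ico a b | f x = 0} = {a} := by
        ext x
        simp only [Set.mem_setOf_eq, Set.mem_Ico, Set.mem_singleton_iff]
        constructor
        · rintro ⟨⟨hx1, hx2⟩, hx3⟩
          by_contra hxa
          have : x ∈ {x ∈ Set.Ioo a b | f x = 0} :=
            ⟨⟨lt_of_le_of_ne hx1 (Ne.symm hxa), hx2⟩, hx3⟩
          rw [hemp] at this; exact this
        · rintro rfl; exact ⟨⟨le_refl _, hab⟩, ha⟩
      have hne : ∀ x ∈ Set.Ioo a b, f x ≠ 0 := by
        intro x hx hfx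
        have : x ∈ {x ∈ Set.Ioo a b | f x = 0} := ⟨hx, hfx⟩
        rw [hemp] at this; exact this
      rw [hset, finsum_mem_singleton, adjacent_signs hf hhyp hab ha hb hne]
      ring
    · obtain ⟨⟨hac, hcb⟩, hfc⟩ := hc
      have hsplit : {x ∈ Set.Ico a b | f x = 0}
          = {x ∈ Set.Ico a c | f x = 0} ∪ {x ∈ Set.Ico c b | f x = 0} := by
        rw [← Set.Ico_union_Ico_eq_Ico (le_of_lt hac) (le_of_lt hcb)]
        ext x
        simp only [Set.mem_setOf_eq, Set.mem_union]
        tauto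
      have hdisj : Disjoint {x ∈ Set.Ico a c | f x = 0} {x ∈ Set.Ico c b | f x = 0} := by
        rw [Set.disjoint_left]
        rintro x ⟨hx1, _⟩ ⟨hx2, _⟩
        exact absurd hx2.1 (not_le.2 hx1.2)
      have hfin1 : {x ∈ Set.Ico a c | f x = 0}.Finite :=
        hfinIcc.subset (fun x hx => ⟨⟨hx.1.1, le_trans (le_of_lt hx.1.2) (le_of_lt hcb)⟩, hx.2⟩)
      have hfin2 : {x ∈ Set.Ico c b | f x = 0}.Finite :=
        hfinIcc.subset (fun x hx =>
          ⟨⟨le_trans (le_of_lt hac) hx.1.1, le_of_lt hx.1.2⟩, hx.2⟩)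
      have hsub1 : {x ∈ Set.Ioo a c | f x = 0} ⊂ {x ∈ Set.Ioo a b | f x = 0} := by
        constructor
        · rintro x ⟨hx1, hx2⟩; exact ⟨⟨hx1.1, lt_trans hx1.2 hcb⟩, hx2⟩
        · intro hsub
          have : c ∈ {x ∈ Set.Ioo a c | f x = 0} := hsub ⟨⟨hac, hcb⟩, hfc⟩
          exact absurd this.1.2 (lt_irrefl c)
      have hsub2 : {x ∈ Set.Ioo c b | f x = 0} ⊂ {x ∈ Set.Ioo a b | f x = 0} := by
        constructor
        · rintro x ⟨hx1, hx2⟩; exact ⟨⟨lt_trans hac hx1.1, hx1.2⟩, hx2⟩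
        · intro hsub
          have : c ∈ {x ∈ Set.Ioo c b | f x = 0} := hsub ⟨⟨hac, hcb⟩, hfc⟩
          exact absurd this.1.1 (lt_irrefl c)
      have hlt1 : ({x ∈ Set.Ioo a c | f x = 0}).ncard < n := by
        rw [← hcard]; exact Set.ncard_lt_ncard hsub1 hfinIoo
      have hlt2 : ({x ∈ Set.Ioo c b | f x = 0}).ncard < n := by
        rw [← hcard]; exact Set.ncard_lt_ncard hsub2 hfinIoo
      rw [hsplit, finsum_mem_union hdisj hfin1 hfin2,
        ih _ hlt1 a c hac ha hfc rfl, ih _ hlt2 c b hcb hfc hb rfl]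
      ring

/-- Index argument in the proof of Theorem 4.3: the indices
`I(z) = sgn(f'(z))` of the hyperbolic pseudo equilibria of the `1`-periodic
sliding vector field `f` cancel around the circle. -/
theorem pseudo_equilibria_index_sum_zero (f : ℝ → ℝ)
    (hf : ContDiff ℝ 1 f)
    (hper : ∀ x : ℝ, f (x + 1) = f x)
    (hhyp : ∀ z : ℝ, f z = 0 → deriv f z ≠ 0) :
    ∑ᶠ z ∈ {x ∈ Set.Ico (0 : ℝ) 1 | f x = 0}, Real.sign (deriv f z) = 0 := by
  have hdiff : Differentiable ℝ f := hf.differentiable one_ne_zero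
  have hder : ∀ x : ℝ, deriv f (x + 1) = deriv f x := by
    intro x
    have hfun : (fun y => f (y + 1)) = f := funext hper
    conv_rhs => rw [← hfun]
    rw [deriv_comp_add_const]
  rcases Set.eq_empty_or_nonempty {x ∈ Set.Ico (0 : ℝ) 1 | f x = 0} with hemp | ⟨z₀, hz₀⟩
  · rw [hemp, finsum_mem_empty]
  · obtain ⟨⟨hz1, hz2⟩, hfz⟩ := hz₀
    have hfz1 : f (z₀ + 1) = 0 := by rw [hper]; exact hfz
    have hkey := sum_indices_Ico hdiff hhyp _ z₀ (z₀ + 1) (by linarith) hfz hfz1 rfl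
    rw [hder z₀] at hkey
    have hkey0 : ∑ᶠ z ∈ {x ∈ Set.Ico z₀ (z₀ + 1) | f x = 0}, Real.sign (deriv f z) = 0 := by
      rw [hkey]; ring
    -- now transfer the sum over `Ico z₀ (z₀+1)` to the sum over `Ico 0 1`
    set A := {x ∈ Set.Ico (0:ℝ) z₀ | f x = 0} with hA
    set B := {x ∈ Set.Ico z₀ (1:ℝ) | f x = 0} with hB
    set C := {x ∈ Set.Ico (1:ℝ) (z₀ + 1) | f x = 0} with hC
    have hfinA : A.Finite := (zeros_finite_aux hdiff hhyp 0 1).subset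
      (fun x hx => ⟨⟨hx.1.1, le_of_lt (lt_of_lt_of_le hx.1.2 (le_of_lt hz2))⟩, hx.2⟩)
    have hfinB : B.Finite := (zeros_finite_aux hdiff hhyp 0 1).subset
      (fun x hx => ⟨⟨le_trans hz1 hx.1.1, le_of_lt hx.1.2⟩, hx.2⟩)
    have hfinC : C.Finite := (zeros_finite_aux hdiff hhyp 1 2).subset
      (fun x hx => ⟨⟨hx.1.1, by linarith [hx.1.2, hz2]⟩, hx.2⟩)
    have hZ : {x ∈ Set.Ico (0:ℝ) 1 | f x = 0} = A ∪ B := by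
      rw [hA, hB, ← Set.Ico_union_Ico_eq_Ico hz1 (le_of_lt hz2)]
      ext x; simp only [Set.mem_setOf_eq, Set.mem_union]; tauto
    have hZ' : {x ∈ Set.Ico z₀ (z₀ + 1) | f x = 0} = B ∪ C := by
      rw [hB, hC, ← Set.Ico_union_Ico_eq_Ico (le_of_lt hz2) (by linarith : (1:ℝ) ≤ z₀ + 1)]
      ext x; simp only [Set.mem_setOf_eq, Set.mem_union]; tauto
    have hdisjAB : Disjoint A B := by
      rw [Set.disjoint_left]; rintro x ⟨hx1, _⟩ ⟨hx2, _⟩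
      exact absurd hx2.1 (not_le.2 hx1.2)
    have hdisjBC : Disjoint B C := by
      rw [Set.disjoint_left]; rintro x ⟨hx1, _⟩ ⟨hx2, _⟩
      exact absurd hx2.1 (not_le.2 hx1.2)
    have hCimg : C = (fun y => y + 1) '' A := by
      ext x
      simp only [Set.mem_image, Set.mem_setOf_eq, Set.mem_Ico, hA, hC]
      constructor
      · rintro ⟨⟨hx1, hx2⟩, hx3⟩
        refine ⟨x - 1, ⟨⟨by linarith, by linarith⟩, ?_⟩, by ring⟩
        have := hper (x - 1)
        rw [sub_add_cancel] at this
        rw [this] at hx3; exact hx3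
      · rintro ⟨y, ⟨⟨hy1, hy2⟩, hy3⟩, rfl⟩
        exact ⟨⟨by linarith, by linarith⟩, by rw [hper]; exact hy3⟩
    have hsumC : ∑ᶠ z ∈ C, Real.sign (deriv f z) = ∑ᶠ z ∈ A, Real.sign (deriv f z) := by
      rw [hCimg, finsum_mem_image ((add_left_injective (1:ℝ)).injOn)]
      apply finsum_mem_congr rfl
      intro x _
      rw [hder]
    rw [hZ, finsum_mem_union hdisjAB hfinA hfinB]
    rw [hZ', finsum_mem_union hdisjBC hfinB hfinC, hsumC] at hkey0
    linarith [hkey0]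
end

section
/- Let f : ℝ → ℝ be continuously differentiable with f(x+1) = f(x) for all x, and suppose the set {x ∈ [0, 1) : f(x) = 0} is finite with odd cardinality. Then there exists a zero z of f with f'(z) = 0, i.e. at least one pseudo equilibrium is a non-hyperbolic (saddle-node) point. (Corollary 4.4: if the number of pseudo equilibria of the sliding vector field is odd, at least one is a saddle-node.) -/
open Filter Topology Set

/-- If a continuous function has no zero on `[u,v]`, its endpoint values have
the same sign. -/
lemma sign_const_aux_s10 {f : ℝ → ℝ} (hc : Continuous f) {u v : ℝ} (huv : u ≤ v)
    (hno : ∀ x ∈ Set.Icc u v, f x ≠ 0) : 0 < f u * f v := by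
  have hu : f u ≠ 0 := hno u ⟨le_rfl, huv⟩
  have hv : f v ≠ 0 := hno v ⟨huv, le_rfl⟩
  by_contra h
  push_neg at h
  have hlt : f u * f v < 0 := lt_of_le_of_ne h (mul_ne_zero hu hv)
  rcases mul_neg_iff.mp hlt with ⟨h1, h2⟩ | ⟨h1, h2⟩
  · obtain ⟨c, hc1, hc2⟩ := intermediate_value_Icc' huv hc.continuousOn
      (Set.mem_Icc.mpr ⟨h2.le, h1.le⟩)
    exact hno c hc1 hc2
  · obtain ⟨c, hc1, hc2⟩ := intermediate_value_Icc huv hc.continuousOn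
      (Set.mem_Icc.mpr ⟨h1.le, h2.le⟩)
    exact hno c hc1 hc2

lemma exists_neg_left {f : ℝ → ℝ} {z d a : ℝ} (hd : HasDerivAt f d z)
    (hz : f z = 0) (hpos : 0 < d) (ha : a < z) :
    ∃ x, a < x ∧ x < z ∧ f x < 0 := by
  have hslope := hasDerivAt_iff_tendsto_slope.mp hd
  have h1 : ∀ᶠ x in 𝓝[≠] z, 0 < slope f z x :=
    hslope.eventually (eventually_gt_nhds hpos)
  have h2 : 𝓝[<] z ≤ 𝓝[≠] z := nhdsWithin_mono _ (fun x hx => ne_of_lt hx)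
  have h3 : ∀ᶠ x in 𝓝[<] z, 0 < slope f z x := h1.filter_mono h2
  have h4 : ∀ᶠ x in 𝓝[<] z, x ∈ Set.Ioo a z :=
    eventually_of_mem (Ioo_mem_nhdsLT_of_mem ⟨ha, le_rfl⟩) fun x hx => hx
  obtain ⟨x, hx1, hx2⟩ := (h3.and h4).exists
  refine ⟨x, hx2.1, hx2.2, ?_⟩
  rw [slope_def_field, hz, sub_zero] at hx1
  rcases div_pos_iff.mp hx1 with ⟨_, hneg⟩ | ⟨hfneg, _⟩
  · linarith [hx2.2]
  · exact hfneg

lemma exists_pos_right {f : ℝ → ℝ} {z d b : ℝ} (hd : HasDerivAt f d z)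
    (hz : f z = 0) (hpos : 0 < d) (hb : z < b) :
    ∃ x, z < x ∧ x < b ∧ 0 < f x := by
  have hslope := hasDerivAt_iff_tendsto_slope.mp hd
  have h1 : ∀ᶠ x in 𝓝[≠] z, 0 < slope f z x :=
    hslope.eventually (eventually_gt_nhds hpos)
  have h2 : 𝓝[>] z ≤ 𝓝[≠] z := nhdsWithin_mono _ (fun x hx => ne_of_gt hx)
  have h3 : ∀ᶠ x in 𝓝[>] z, 0 < slope f z x := h1.filter_mono h2
  have h4 : ∀ᶠ x in 𝓝[>] z, x ∈ Set.Ioo z b :=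
    eventually_of_mem (Ioo_mem_nhdsGT_of_mem ⟨le_rfl, hb⟩) fun x hx => hx
  obtain ⟨x, hx1, hx2⟩ := (h3.and h4).exists
  refine ⟨x, hx2.1, hx2.2, ?_⟩
  rw [slope_def_field, hz, sub_zero] at hx1
  rcases div_pos_iff.mp hx1 with ⟨hfpos, _⟩ | ⟨_, hneg⟩
  · exact hfpos
  · linarith [hx2.1]

/-- A transversal zero which is the unique zero on `[a,b]` forces a sign flip. -/
lemma flip_aux {f : ℝ → ℝ} (hc : Continuous f) {a b z : ℝ} (ha : a < z) (hb : z < b)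
    (hfz : f z = 0) (hd : HasDerivAt f (deriv f z) z) (hdz : deriv f z ≠ 0)
    (huniq : ∀ x ∈ Set.Icc a b, f x = 0 → x = z) : f a * f b < 0 := by
  rcases hdz.lt_or_gt with hneg | hpos
  · -- derivative negative: apply the positive case to -f
    have hd' : HasDerivAt (fun x => -f x) (-(deriv f z)) z := hd.neg
    have hz' : (fun x => -f x) z = 0 := by simp [hfz]
    obtain ⟨x1, hx1a, hx1z, hx1⟩ := exists_neg_left hd' hz' (by linarith) ha
    obtain ⟨x2, hx2z, hx2b, hx2⟩ := exists_pos_right hd' hz' (by linarith) hb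
    have hfx1 : 0 < f x1 := by simpa using hx1
    have hfx2 : f x2 < 0 := by simpa using hx2
    have hno1 : ∀ x ∈ Set.Icc a x1, f x ≠ 0 := by
      intro x hx hfx
      have := huniq x ⟨hx.1, le_trans hx.2 (by linarith)⟩ hfx
      linarith [hx.2, this ▸ hx.2]
    have hno2 : ∀ x ∈ Set.Icc x2 b, f x ≠ 0 := by
      intro x hx hfx
      have := huniq x ⟨le_trans (by linarith) hx.1, hx.2⟩ hfx
      linarith [this ▸ hx.1]
    have h1 := sign_const_aux_s10 hc (by linarith : a ≤ x1) hno1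
    have h2 := sign_const_aux_s10 hc (by linarith : x2 ≤ b) hno2
    have hfa : 0 < f a := by nlinarith
    have hfb : f b < 0 := by nlinarith
    exact mul_neg_of_pos_of_neg hfa hfb
  · obtain ⟨x1, hx1a, hx1z, hx1⟩ := exists_neg_left hd hfz hpos ha
    obtain ⟨x2, hx2z, hx2b, hx2⟩ := exists_pos_right hd hfz hpos hb
    have hno1 : ∀ x ∈ Set.Icc a x1, f x ≠ 0 := by
      intro x hx hfx
      have := huniq x ⟨hx.1, le_trans hx.2 (by linarith)⟩ hfx
      linarith [this ▸ hx.2]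
    have hno2 : ∀ x ∈ Set.Icc x2 b, f x ≠ 0 := by
      intro x hx hfx
      have := huniq x ⟨le_trans (by linarith) hx.1, hx.2⟩ hfx
      linarith [this ▸ hx.1]
    have h1 := sign_const_aux_s10 hc (by linarith : a ≤ x1) hno1
    have h2 := sign_const_aux_s10 hc (by linarith : x2 ≤ b) hno2
    have hfa : f a < 0 := by nlinarith
    have hfb : 0 < f b := by nlinarith
    exact mul_neg_of_neg_of_pos hfa hfb

/-- Parity of the number of transversal zeros determines the relative sign of
the endpoint values. -/
lemma key_parity (f : ℝ → ℝ) (hc : Continuous f)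
    (hd : ∀ x : ℝ, HasDerivAt f (deriv f x) x) :
    ∀ (n : ℕ) (K : Finset ℝ) (a b : ℝ), K.card = n → a < b →
      (∀ x ∈ Set.Icc a b, (f x = 0 ↔ x ∈ K)) →
      (∀ x ∈ K, x ∈ Set.Ioo a b) → (∀ x ∈ K, deriv f x ≠ 0) →
      0 < (-1 : ℝ) ^ n * (f a * f b) := by
  intro n
  induction n with
  | zero =>
    intro K a b hcard hab hiff _ _
    have hK : K = ∅ := Finset.card_eq_zero.mp hcard
    subst hK
    have hno : ∀ x ∈ Set.Icc a b, f x ≠ 0 := by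
      intro x hx hfx
      simpa using (hiff x hx).mp hfx
    simpa using sign_const_aux_s10 hc hab.le hno
  | succ n IH =>
    intro K a b hcard hab hiff hsub htrans
    have hKne : K.Nonempty := Finset.card_pos.mp (by omega)
    set z := K.max' hKne with hzdef
    have hzK : z ∈ K := K.max'_mem hKne
    have hzIoo := hsub z hzK
    set K' := K.erase z with hK'def
    have hK'card : K'.card = n := by
      rw [hK'def, Finset.card_erase_of_mem hzK, hcard]
      omega
    -- choose m : an upper bound for K' strictly below z, at least a
    set m := if h : K'.Nonempty then K'.max' h else a with hmdef
    have hma : a ≤ m := by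
      rw [hmdef]
      split
      · rename_i h
        have := hsub _ (Finset.mem_of_mem_erase (K'.max'_mem h))
        exact this.1.le
      · exact le_rfl
    have hmz : m < z := by
      rw [hmdef]
      split
      · rename_i h
        have hmem := K'.max'_mem h
        have hle : K'.max' h ≤ z := K.le_max' _ (Finset.mem_of_mem_erase hmem)
        have hne : K'.max' h ≠ z := Finset.ne_of_mem_erase hmem
        exact lt_of_le_of_ne hle hne
      · exact hzIoo.1
    have hbound : ∀ x ∈ K', x ≤ m := by
      intro x hx
      rw [hmdef]
      split
      · exact K'.le_max' x hx
      · rename_i h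
        exact absurd ⟨x, hx⟩ h
    set t := (m + z) / 2 with htdef
    have hat : a < t := by rw [htdef]; linarith
    have hmt : m < t := by rw [htdef]; linarith
    have htz : t < z := by rw [htdef]; linarith
    have htb : t < b := lt_trans htz hzIoo.2
    -- zeros on [a,t] are exactly K'
    have hiff' : ∀ x ∈ Set.Icc a t, (f x = 0 ↔ x ∈ K') := by
      intro x hx
      have hx' : x ∈ Set.Icc a b := ⟨hx.1, le_trans hx.2 htb.le⟩
      constructor
      · intro hfx
        have hxK := (hiff x hx').mp hfx
        refine Finset.mem_erase.mpr ⟨?_, hxK⟩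
        intro hxz
        rw [hxz] at hx
        linarith [hx.2]
      · intro hxK'
        exact (hiff x hx').mpr (Finset.mem_of_mem_erase hxK')
    have hsub' : ∀ x ∈ K', x ∈ Set.Ioo a t := by
      intro x hx
      exact ⟨(hsub x (Finset.mem_of_mem_erase hx)).1, lt_of_le_of_lt (hbound x hx) hmt⟩
    have htrans' : ∀ x ∈ K', deriv f x ≠ 0 := fun x hx =>
      htrans x (Finset.mem_of_mem_erase hx)
    have h1 := IH K' a t hK'card hat hiff' hsub' htrans'
    -- z is the unique zero on [t,b]
    have huniq : ∀ x ∈ Set.Icc t b, f x = 0 → x = z := by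
      intro x hx hfx
      have hx' : x ∈ Set.Icc a b := ⟨le_trans hat.le hx.1, hx.2⟩
      have hxK := (hiff x hx').mp hfx
      by_contra hxz
      have : x ∈ K' := Finset.mem_erase.mpr ⟨hxz, hxK⟩
      have := hbound x this
      linarith [hx.1]
    have h2 : f t * f b < 0 :=
      flip_aux hc htz hzIoo.2 ((hiff z ⟨hzIoo.1.le, hzIoo.2.le⟩).mpr hzK)
        (hd z) (htrans z hzK) huniq
    have hft : f t ≠ 0 := by
      intro hfx
      have : t ∈ K' := (hiff' t ⟨hat.le, le_rfl⟩).mp hfx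
      have := hbound t this
      linarith
    have ht2 : 0 < f t * f t := mul_self_pos.mpr hft
    rw [pow_succ]
    nlinarith [mul_pos h1 (neg_pos.mpr h2), ht2]

/-- Corollary 4.4: if the number of pseudo equilibria of the `1`-periodic
sliding vector field `f` in one period is finite and odd, then at least one
pseudo equilibrium is a saddle-node (non-hyperbolic) point. -/
theorem odd_pseudo_equilibria_saddle_node (f : ℝ → ℝ)
    (hf : ContDiff ℝ 1 f)
    (hper : ∀ x : ℝ, f (x + 1) = f x)
    (hfin : ({x ∈ Set.Ico (0 : ℝ) 1 | f x = 0}).Finite)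
    (hodd : Odd ({x ∈ Set.Ico (0 : ℝ) 1 | f x = 0}).ncard) :
    ∃ z : ℝ, f z = 0 ∧ deriv f z = 0 := by
  by_contra hcon
  push_neg at hcon
  have hc : Continuous f := hf.continuous
  have hd : ∀ x : ℝ, HasDerivAt f (deriv f x) x := fun x =>
    (hf.differentiable one_ne_zero x).hasDerivAt
  set T := hfin.toFinset with hTdef
  have hmemT : ∀ x, x ∈ T ↔ (0 ≤ x ∧ x < 1) ∧ f x = 0 := by
    intro x
    rw [hTdef, Set.Finite.mem_toFinset]
    simp [Set.mem_Ico]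
  have hncard : ({x ∈ Set.Ico (0 : ℝ) 1 | f x = 0}).ncard = T.card := by
    rw [Set.ncard_eq_toFinset_card _ hfin]
  rw [hncard] at hodd
  have hTne : T.Nonempty := Finset.card_pos.mp (by
    rcases hodd with ⟨k, hk⟩; omega)
  set z0 := T.min' hTne with hz0def
  set zm := T.max' hTne with hzmdef
  have hz0T : z0 ∈ T := T.min'_mem hTne
  have hzmT : zm ∈ T := T.max'_mem hTne
  have hz0 := (hmemT z0).mp hz0T
  have hzm := (hmemT zm).mp hzmT
  set a := (zm - 1 + z0) / 2 with hadef
  set b := a + 1 with hbdef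
  have haz0 : a < z0 := by rw [hadef]; linarith [hz0.1.1, hzm.1.2]
  have hzmb : zm < b := by rw [hbdef, hadef]; linarith [hz0.1.1, hzm.1.2]
  have hab : a < b := by rw [hbdef]; linarith
  -- zeros on [a,b] are exactly T
  have hiff : ∀ x ∈ Set.Icc a b, (f x = 0 ↔ x ∈ T) := by
    intro x hx
    constructor
    · intro hfx
      rcases le_or_gt 0 x with hx0 | hx0
      · rcases lt_or_ge x 1 with hx1 | hx1
        · exact (hmemT x).mpr ⟨⟨hx0, hx1⟩, hfx⟩
        · -- x ≥ 1 : then x - 1 ∈ T, so x - 1 ≥ z0 > a ≥ x - 1, absurd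
          exfalso
          have hfx' : f (x - 1) = 0 := by
            have := hper (x - 1); simp only [sub_add_cancel] at this
            rw [this] at hfx; exact hfx
          have hx1' : x - 1 < 1 := by
            have := hx.2; rw [hbdef] at this
            have : x - 1 ≤ a := by linarith
            linarith
          have hmem : x - 1 ∈ T := (hmemT _).mpr ⟨⟨by linarith, hx1'⟩, hfx'⟩
          have := T.min'_le _ hmem
          have hxa : x - 1 ≤ a := by
            have := hx.2; rw [hbdef] at this; linarith
          rw [← hz0def] at this
          linarith
      · -- x < 0 : then x + 1 ∈ T, so x + 1 ≤ zm < b ≤ x + 1, absurd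
        exfalso
        have hfx' : f (x + 1) = 0 := by rw [hper]; exact hfx
        have hxge : 0 ≤ x + 1 := by
          have := hx.1; rw [hadef] at this
          linarith [hz0.1.1, hzm.1.1]
        have hmem : x + 1 ∈ T := (hmemT _).mpr ⟨⟨hxge, by linarith⟩, hfx'⟩
        have := T.le_max' _ hmem
        rw [← hzmdef] at this
        have : x + 1 ≤ zm := this
        have hbx : b ≤ x + 1 := by rw [hbdef]; linarith [hx.1]
        linarith
    · intro hxT
      exact ((hmemT x).mp hxT).2
  have hsub : ∀ x ∈ T, x ∈ Set.Ioo a b := by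
    intro x hx
    have h1 := T.min'_le x hx
    have h2 := T.le_max' x hx
    rw [← hz0def] at h1
    rw [← hzmdef] at h2
    exact ⟨lt_of_lt_of_le haz0 h1, lt_of_le_of_lt h2 hzmb⟩
  have htrans : ∀ x ∈ T, deriv f x ≠ 0 := fun x hx =>
    hcon x ((hmemT x).mp hx).2
  have hkey := key_parity f hc hd T.card T a b rfl hab hiff hsub htrans
  rw [hodd.neg_one_pow] at hkey
  have hfb : f b = f a := by rw [hbdef]; exact hper a
  rw [hfb] at hkey
  nlinarith [sq_nonneg (f a)]
end
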